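/- For the active-PI PLL system with sinusoidal PD characteristic, the only solutions along which the Lyapunov derivative −K(τ₂/τ₁)(sin θ/2)² vanishes identically are the constant solutions at equilibria: if a solution satisfies sin(θ(t)) = 0 for all t, then θ(t) is constant (equal to a multiple of π) and x(t) ≡ ω/K. -/

import Mathlib

/-- For the active-PI PLL with sinusoidal PD, if a solution
satisfies `sin(θ(t)) = 0` for all `t ≥ 0`, then it is a constant equilibrium
solution: `θ(t) ≡ θ(0)` is a multiple of `π` and `x(t) ≡ ω/K`. -/
theorem activePI_invariant_set_only_equilibria
    (K τ₁ τ₂ ω : ℝ) (hK : 0 < K) (hτ₁ : 0 < τ₁) (hτ₂ : 0 < τ₂)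
    (x θ : ℝ → ℝ)
    (hx : ∀ t, 0 ≤ t → HasDerivAt x (Real.sin (θ t) / (2 * τ₁)) t)
    (hθ : ∀ t, 0 ≤ t → HasDerivAt θ
      (ω - K * (x t + τ₂ / (2 * τ₁) * Real.sin (θ t))) t)
    (hcont : ContinuousOn θ (Set.Ici 0))
    (hsin : ∀ t, 0 ≤ t → Real.sin (θ t) = 0) :
    (∀ t, 0 ≤ t → θ t = θ 0) ∧
    (∃ n : ℤ, θ 0 = n * Real.pi) ∧
    (∀ t, 0 ≤ t → x t = ω / K) := by
  have hpi : (0:ℝ) < Real.pi := Real.pi_pos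
  -- θ is constant
  have hθconst : ∀ t, 0 ≤ t → θ t = θ 0 := by
    intro t ht
    by_contra hne
    obtain ⟨k, hk⟩ := Real.sin_eq_zero_iff.1 (hsin 0 le_rfl)
    obtain ⟨m, hm⟩ := Real.sin_eq_zero_iff.1 (hsin t ht)
    set c : ℝ := min (θ 0) (θ t) + Real.pi / 2 with hc
    have hmaxmin : min (θ 0) (θ t) + Real.pi ≤ max (θ 0) (θ t) := by
      rcases le_total (θ 0) (θ t) with h | h
      · rw [min_eq_left h, max_eq_right h]
        have hkm : k < m := by
          by_contra hkm
          push_neg at hkm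
          have : (m:ℝ) * Real.pi ≤ (k:ℝ) * Real.pi := by
            apply mul_le_mul_of_nonneg_right _ hpi.le
            exact_mod_cast hkm
          rw [hk, hm] at this
          exact hne (le_antisymm this h)
        have : (k:ℝ) * Real.pi + Real.pi ≤ (m:ℝ) * Real.pi := by
          have : ((k:ℝ) + 1) * Real.pi ≤ (m:ℝ) * Real.pi := by
            apply mul_le_mul_of_nonneg_right _ hpi.le
            exact_mod_cast hkm
          linarith [this]
        rw [hk, hm] at this; linarith
      · rw [min_eq_right h, max_eq_left h]
        have hkm : m < k := by
          by_contra hkm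
          push_neg at hkm
          have : (k:ℝ) * Real.pi ≤ (m:ℝ) * Real.pi := by
            apply mul_le_mul_of_nonneg_right _ hpi.le
            exact_mod_cast hkm
          rw [hk, hm] at this
          exact hne (le_antisymm h this)
        have : (m:ℝ) * Real.pi + Real.pi ≤ (k:ℝ) * Real.pi := by
          have : ((m:ℝ) + 1) * Real.pi ≤ (k:ℝ) * Real.pi := by
            apply mul_le_mul_of_nonneg_right _ hpi.le
            exact_mod_cast hkm
          linarith [this]
        rw [hk, hm] at this; linarith
    have hcmem : c ∈ Set.uIcc (θ 0) (θ t) := by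
      rw [Set.uIcc_eq_union]
      rcases le_total (θ 0) (θ t) with h | h
      · left
        constructor
        · simp only [hc, min_eq_left h]; linarith
        · have := hmaxmin; rw [min_eq_left h, max_eq_right h] at this
          simp only [hc, min_eq_left h]; linarith
      · right
        constructor
        · simp only [hc, min_eq_right h]; linarith
        · have := hmaxmin; rw [min_eq_right h, max_eq_left h] at this
          simp only [hc, min_eq_right h]; linarith
    have hsub : Set.uIcc 0 t ⊆ Set.Ici (0:ℝ) := by
      rw [Set.uIcc_of_le ht]
      exact fun s hs => hs.1
    obtain ⟨s, hs, hsc⟩ := intermediate_value_uIcc (hcont.mono hsub) hcmem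
    have hs0 : 0 ≤ s := hsub hs
    have : Real.sin c = 0 := hsc ▸ hsin s hs0
    obtain ⟨j, hj⟩ := Real.sin_eq_zero_iff.1 this
    -- c = min + π/2 with min a multiple of π: contradiction
    have hminpi : ∃ l : ℤ, min (θ 0) (θ t) = (l:ℝ) * Real.pi := by
      rcases min_cases (θ 0) (θ t) with ⟨h, _⟩ | ⟨h, _⟩
      · exact ⟨k, by rw [h, hk]⟩
      · exact ⟨m, by rw [h, hm]⟩
    obtain ⟨l, hl⟩ := hminpi
    have : (j:ℝ) * Real.pi = (l:ℝ) * Real.pi + Real.pi / 2 := by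
      rw [hj, hc, hl]
    have h2 : ((j:ℝ) - l) * Real.pi = Real.pi / 2 := by ring_nf; linarith [this]
    have h3 : ((j:ℝ) - l) = 1 / 2 := by
      field_simp at h2
      have := hpi.ne'
      nlinarith [h2]
    have h4 : (2 * (j - l) : ℤ) = 1 := by
      have : (2 * ((j:ℝ) - l)) = 1 := by linarith
      exact_mod_cast this
    omega
  refine ⟨hθconst, Real.sin_eq_zero_iff.1 (hsin 0 le_rfl) |>.imp (fun n h => h.symm), ?_⟩
  -- x is constant
  have hxconst : ∀ t, 0 ≤ t → x t = x 0 := by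
    intro t ht
    have := constant_of_has_deriv_right_zero (f := x) (a := 0) (b := t)
      (fun s hs => ((hx s hs.1).continuousAt).continuousWithinAt)
      (fun s hs => by
        have h0 : Real.sin (θ s) / (2 * τ₁) = 0 := by rw [hsin s hs.1]; simp
        exact (h0 ▸ (hx s hs.1).hasDerivWithinAt))
    exact this t ⟨ht, le_rfl⟩
  -- value of x 0
  have hx0 : x 0 = ω / K := by
    have hd1 : HasDerivWithinAt θ (ω - K * (x 0 + τ₂ / (2 * τ₁) * Real.sin (θ 0)))
        (Set.Ici 0) 0 := (hθ 0 le_rfl).hasDerivWithinAt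
    have hd2 : HasDerivWithinAt θ 0 (Set.Ici 0) 0 := by
      have : HasDerivWithinAt (fun _ : ℝ => θ 0) 0 (Set.Ici 0) 0 :=
        (hasDerivWithinAt_const _ _ _)
      exact this.congr (fun s hs => hθconst s hs) (hθconst 0 le_rfl)
    have hu : UniqueDiffWithinAt ℝ (Set.Ici (0:ℝ)) 0 :=
      uniqueDiffOn_Ici 0 0 Set.self_mem_Ici
    have := hd1.derivWithin hu ▸ hd2.derivWithin hu
    have heq : ω - K * (x 0 + τ₂ / (2 * τ₁) * Real.sin (θ 0)) = 0 := this
    rw [hsin 0 le_rfl] at heq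
    field_simp at heq ⊢
    nlinarith
  intro t ht
  rw [hxconst t ht, hx0]
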